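/- arXiv:1511.07032 — 2 statements merged into one kernel-verified Lean document; each statement's English description precedes it below -/
import Mathlib

section
/- Let g and r be nonnegative integers and let i_1, ..., i_n be integers each at least 2. If the rational number e = 2 - 2g - r - Σ_{k=1}^n (i_k - 1)/i_k is negative, then |e| ≥ 1/42. -/
private lemma qpos (x : ℤ) (hx : 2 ≤ x) : (0:ℚ) < (x:ℚ) := by
  exact_mod_cast (by omega : (0:ℤ) < x)

private lemma inv_le_of (x m : ℤ) (hm : 0 < m) (hx : m ≤ x) : (1:ℚ)/(x:ℚ) ≤ 1/(m:ℚ) := by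
  have h1 : (0:ℚ) < (m:ℚ) := by exact_mod_cast hm
  have h2 : ((m:ℚ)) ≤ (x:ℚ) := by exact_mod_cast hx
  exact one_div_le_one_div_of_le h1 h2

private lemma tight (x m : ℤ) (hx : 2 ≤ x) (hm : 0 < m)
    (h : (1:ℚ)/(x:ℚ) < 1/(m:ℚ)) : (1:ℚ)/(x:ℚ) ≤ 1/((m:ℚ)+1) := by
  have hxq : (0:ℚ) < (x:ℚ) := qpos x hx
  have hmq : (0:ℚ) < (m:ℚ) := by exact_mod_cast hm
  have hlt : (m:ℚ) < (x:ℚ) := by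
    by_contra hc
    push_neg at hc
    have := one_div_le_one_div_of_le hxq hc
    linarith
  have : m + 1 ≤ x := by exact_mod_cast (by exact_mod_cast hlt : m < x)
  have := inv_le_of x (m+1) (by omega) this
  push_cast at this
  linarith

private lemma L2 (a b : ℤ) (ha : 2 ≤ a) (hb : 2 ≤ b)
    (h : (1:ℚ)/a + 1/b < 1) : (1:ℚ)/a + 1/b ≤ 5/6 := by
  have h2a : (1:ℚ)/a ≤ 1/2 := by have := inv_le_of a 2 (by norm_num) ha; norm_num at this ⊢; exact this
  have h2b : (1:ℚ)/b ≤ 1/2 := by have := inv_le_of b 2 (by norm_num) hb; norm_num at this ⊢; exact this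
  rcases hb.lt_or_eq with hb3 | hb2
  · have : (1:ℚ)/b ≤ 1/3 := by
      have := inv_le_of b 3 (by norm_num) (by omega); norm_num at this ⊢; exact this
    linarith
  · have hbq : (b:ℚ) = 2 := by exact_mod_cast hb2.symm
    have hlt : (1:ℚ)/a < 1/(2:ℤ) := by push_cast; rw [hbq] at h; linarith
    have := tight a 2 ha (by norm_num) hlt
    push_cast at this
    rw [hbq]
    linarith

private lemma L3sorted (a b c : ℤ) (ha : 2 ≤ a) (hab : a ≤ b) (hbc : b ≤ c)
    (h : (1:ℚ)/a + 1/b + 1/c < 1) : (1:ℚ)/a + 1/b + 1/c ≤ 41/42 := by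
  have hb : 2 ≤ b := le_trans ha hab
  have hc : 2 ≤ c := le_trans hb hbc
  have hcq : (0:ℚ) < (c:ℚ) := qpos c hc
  have hcpos : (0:ℚ) < 1/(c:ℚ) := by positivity
  have ha2 : (1:ℚ)/a ≤ 1/2 := by have := inv_le_of a 2 (by norm_num) ha; norm_num at this ⊢; exact this
  have hb2 : (1:ℚ)/b ≤ 1/2 := by have := inv_le_of b 2 (by norm_num) hb; norm_num at this ⊢; exact this
  rcases ha.lt_or_eq with ha3 | ha2'
  · -- 3 ≤ a ≤ b, so 1/c < 1/3
    have ha3' : (1:ℚ)/a ≤ 1/3 := by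
      have := inv_le_of a 3 (by norm_num) (by omega); norm_num at this ⊢; exact this
    have hb3' : (1:ℚ)/b ≤ 1/3 := by
      have := inv_le_of b 3 (by norm_num) (by omega); norm_num at this ⊢; exact this
    rcases (by omega : c = 3 ∨ 4 ≤ c) with hc3 | hc4
    · exfalso
      have haa : a = 3 := by omega
      have hbb : b = 3 := by omega
      rw [haa, hbb, hc3] at h
      norm_num at h
    · have : (1:ℚ)/c ≤ 1/4 := by
        have := inv_le_of c 4 (by norm_num) hc4; norm_num at this ⊢; exact this
      linarith
  · -- a = 2
    have haq : (1:ℚ)/a = 1/2 := by rw [← ha2']; norm_num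
    have hbc' : (1:ℚ)/b + 1/c < 1/2 := by linarith
    have hb3 : 3 ≤ b := by
      by_contra hb3
      have : b = 2 := by omega
      subst this
      norm_num at hbc'
      linarith
    rcases hb3.lt_or_eq with hb4 | hb3'
    · -- b ≥ 4, then 1/c < 1/4
      have hb4' : (1:ℚ)/b ≤ 1/4 := by
        have := inv_le_of b 4 (by norm_num) (by omega); norm_num at this ⊢; exact this
      rcases (by omega : c = 4 ∨ 5 ≤ c) with hc4 | hc5
      · exfalso
        have hbb : b = 4 := by omega
        rw [hbb, hc4] at hbc'
        norm_num at hbc'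
      · have : (1:ℚ)/c ≤ 1/5 := by
          have := inv_le_of c 5 (by norm_num) hc5; norm_num at this ⊢; exact this
        linarith
    · -- b = 3, then 1/c < 1/6
      have hbq : (1:ℚ)/b = 1/3 := by rw [← hb3']; norm_num
      have hlt : (1:ℚ)/c < 1/(6:ℤ) := by push_cast; linarith
      have := tight c 6 hc (by norm_num) hlt
      push_cast at this
      linarith

private lemma L3 (a b c : ℤ) (ha : 2 ≤ a) (hb : 2 ≤ b) (hc : 2 ≤ c)
    (h : (1:ℚ)/a + 1/b + 1/c < 1) : (1:ℚ)/a + 1/b + 1/c ≤ 41/42 := by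
  rcases le_total a b with h01 | h01 <;> rcases le_total a c with h02 | h02 <;>
    rcases le_total b c with h12 | h12
  · have := L3sorted a b c ha h01 h12 (by linarith); linarith
  · have := L3sorted a c b ha h02 (by omega) (by linarith); linarith
  · have := L3sorted a b c ha (by omega) (by omega) (by linarith); linarith
  · have := L3sorted c a b hc h02 h01 (by linarith); linarith
  · have := L3sorted b a c hb h01 h02 (by linarith); linarith
  · have := L3sorted b a c hb (by omega) (by omega) (by linarith); linarith
  · have := L3sorted b c a hb h12 h02 (by linarith); linarith
  · have := L3sorted c b a hc h12 h01 (by linarith); linarith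

private lemma L4 (a b c d : ℤ) (ha : 2 ≤ a) (hb : 2 ≤ b) (hc : 2 ≤ c) (hd : 2 ≤ d)
    (h : (1:ℚ)/a + 1/b + 1/c + 1/d < 2) : (1:ℚ)/a + 1/b + 1/c + 1/d ≤ 83/42 := by
  have h2 : ∀ x : ℤ, 2 ≤ x → (1:ℚ)/x ≤ 1/2 := fun x hx => by
    have := inv_le_of x 2 (by norm_num) hx; norm_num at this ⊢; exact this
  have h3 : ∀ x : ℤ, 3 ≤ x → (1:ℚ)/x ≤ 1/3 := fun x hx => by
    have := inv_le_of x 3 (by norm_num) hx; norm_num at this ⊢; exact this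
  rcases ha.lt_or_eq with ha' | ha'
  · have := h3 a (by omega); have := h2 b hb; have := h2 c hc; have := h2 d hd; linarith
  rcases hb.lt_or_eq with hb' | hb'
  · have := h3 b (by omega); have := h2 a ha; have := h2 c hc; have := h2 d hd; linarith
  rcases hc.lt_or_eq with hc' | hc'
  · have := h3 c (by omega); have := h2 a ha; have := h2 b hb; have := h2 d hd; linarith
  rcases hd.lt_or_eq with hd' | hd'
  · have := h3 d (by omega); have := h2 a ha; have := h2 b hb; have := h2 c hc; linarith
  · exfalso
    have haq : (a:ℚ) = 2 := by exact_mod_cast ha'.symm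
    have hbq : (b:ℚ) = 2 := by exact_mod_cast hb'.symm
    have hcq : (c:ℚ) = 2 := by exact_mod_cast hc'.symm
    have hdq : (d:ℚ) = 2 := by exact_mod_cast hd'.symm
    rw [haq, hbq, hcq, hdq] at h
    norm_num at h

/-- If `e = 2 - 2g - r - Σ (i_k - 1)/i_k` is negative (g, r nonnegative integers,
each `i_k ≥ 2`), then `|e| ≥ 1/42`. -/
theorem stmt_0 (g r : ℕ) (n : ℕ) (i : Fin n → ℤ) (hi : ∀ k, 2 ≤ i k)
    (e : ℚ) (he : e = 2 - 2 * (g : ℚ) - (r : ℚ) - ∑ k, ((i k : ℚ) - 1) / (i k : ℚ))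
    (hneg : e < 0) : 1 / 42 ≤ |e| := by
  rw [abs_of_neg hneg]
  -- suffices to show e ≤ -1/42
  have hipos : ∀ k, (0:ℚ) < (i k : ℚ) := fun k => qpos _ (hi k)
  have hterm : ∀ k, ((i k : ℚ) - 1) / (i k : ℚ) = 1 - 1/(i k : ℚ) := by
    intro k
    have := (hipos k).ne'
    field_simp
  have hsum : (∑ k, ((i k:ℚ)-1)/(i k : ℚ)) = n - ∑ k, (1:ℚ)/(i k : ℚ) := by
    simp_rw [hterm, Finset.sum_sub_distrib, Finset.sum_const, Finset.card_univ,
      Fintype.card_fin, nsmul_eq_mul, mul_one]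
  rw [hsum] at he
  have hub : ∀ k, (1:ℚ)/(i k : ℚ) ≤ 1/2 := fun k => by
    have := inv_le_of (i k) 2 (by norm_num) (hi k); norm_num at this ⊢; exact this
  have hlb : ∀ k, (0:ℚ) < 1/(i k : ℚ) := fun k => one_div_pos.mpr (hipos k)
  have hTub : (∑ k, (1:ℚ)/(i k : ℚ)) ≤ n * (1/2) := by
    calc (∑ k, (1:ℚ)/(i k : ℚ)) ≤ ∑ _k : Fin n, (1:ℚ)/2 :=
          Finset.sum_le_sum (fun k _ => hub k)
      _ = n * (1/2) := by simp [Finset.sum_const, Finset.card_univ]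
  have hM0 : (0:ℚ) ≤ 2*(g:ℚ) + (r:ℚ) := by positivity
  match n, i, hi, hub, hlb, hTub, he with
  | 0, i, hi, hub, hlb, hTub, he =>
    -- e = 2 - 2g - r, an "integer"; e < 0 forces 2g+r ≥ 3
    simp only [Finset.univ_eq_empty, Finset.sum_empty, Nat.cast_zero] at he
    have h3 : 3 ≤ 2*g + r := by
      by_contra hc
      push_neg at hc
      have : (2*(g:ℚ) + (r:ℚ)) ≤ 2 := by exact_mod_cast (by omega : 2*g + r ≤ 2)
      rw [he] at hneg; push_cast at this; linarith
    have : (3:ℚ) ≤ 2*(g:ℚ) + (r:ℚ) := by exact_mod_cast (by exact_mod_cast h3 : (3:ℤ) ≤ 2*(g:ℤ)+r)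
    rw [he]; linarith
  | 1, i, hi, hub, hlb, hTub, he =>
    -- e = 1 - (2g+r) + 1/i0 ; e<0 forces 2g+r ≥ 2
    rw [Fin.sum_univ_one] at he
    have h2 : 2 ≤ 2*g + r := by
      by_contra hc
      push_neg at hc
      have : (2*(g:ℚ) + (r:ℚ)) ≤ 1 := by exact_mod_cast (by omega : 2*g + r ≤ 1)
      have := hlb 0
      rw [he] at hneg; push_cast at hneg ⊢; linarith
    have hq : (2:ℚ) ≤ 2*(g:ℚ) + (r:ℚ) := by exact_mod_cast (by exact_mod_cast h2 : (2:ℤ) ≤ 2*(g:ℤ)+r)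
    have := hub 0
    rw [he]; push_cast; linarith
  | 2, i, hi, hub, hlb, hTub, he =>
    rw [Fin.sum_univ_two] at he
    rcases (by omega : 2*g + r = 0 ∨ 2*g + r = 1 ∨ 2 ≤ 2*g + r) with h | h | h
    · -- e = 1/a + 1/b > 0, contradiction
      exfalso
      have hg : g = 0 := by omega
      have hr : r = 0 := by omega
      rw [hg, hr] at he
      have := hlb 0; have := hlb 1
      rw [he] at hneg; push_cast at hneg; linarith
    · -- 2g + r = 1 : e = 1/a + 1/b - 1 < 0
      have hq : 2*(g:ℚ) + (r:ℚ) = 1 := by exact_mod_cast (by exact_mod_cast h : (2*(g:ℤ)+r) = 1)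
      have hlt : (1:ℚ)/(i 0) + 1/(i 1) < 1 := by rw [he] at hneg; push_cast at hneg; linarith
      have := L2 (i 0) (i 1) (hi 0) (hi 1) hlt
      rw [he]; push_cast; linarith
    · have hq : (2:ℚ) ≤ 2*(g:ℚ) + (r:ℚ) := by exact_mod_cast (by exact_mod_cast h : (2:ℤ) ≤ 2*(g:ℤ)+r)
      have := hub 0; have := hub 1
      rw [he]; push_cast; linarith
  | 3, i, hi, hub, hlb, hTub, he =>
    rw [Fin.sum_univ_three] at he
    rcases (by omega : 2*g + r = 0 ∨ 1 ≤ 2*g + r) with h | h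
    · have hg : g = 0 := by omega
      have hr : r = 0 := by omega
      rw [hg, hr] at he
      have hlt : (1:ℚ)/(i 0) + 1/(i 1) + 1/(i 2) < 1 := by
        rw [he] at hneg; push_cast at hneg; linarith
      have := L3 (i 0) (i 1) (i 2) (hi 0) (hi 1) (hi 2) hlt
      rw [he]; push_cast; linarith
    · have hq : (1:ℚ) ≤ 2*(g:ℚ) + (r:ℚ) := by exact_mod_cast (by exact_mod_cast h : (1:ℤ) ≤ 2*(g:ℤ)+r)
      have := hub 0; have := hub 1; have := hub 2
      rw [he]; push_cast; linarith
  | 4, i, hi, hub, hlb, hTub, he =>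
    rw [Fin.sum_univ_four] at he
    rcases (by omega : 2*g + r = 0 ∨ 1 ≤ 2*g + r) with h | h
    · have hg : g = 0 := by omega
      have hr : r = 0 := by omega
      rw [hg, hr] at he
      have hlt : (1:ℚ)/(i 0) + 1/(i 1) + 1/(i 2) + 1/(i 3) < 2 := by
        rw [he] at hneg; push_cast at hneg; linarith
      have := L4 (i 0) (i 1) (i 2) (i 3) (hi 0) (hi 1) (hi 2) (hi 3) hlt
      rw [he]; push_cast; linarith
    · have hq : (1:ℚ) ≤ 2*(g:ℚ) + (r:ℚ) := by exact_mod_cast (by exact_mod_cast h : (1:ℤ) ≤ 2*(g:ℤ)+r)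
      have := hub 0; have := hub 1; have := hub 2; have := hub 3
      rw [he]; push_cast; linarith
  | (m+5), i, hi, hub, hlb, hTub, he =>
    -- e ≤ 2 - n + n/2 = 2 - n/2 ≤ -1/2
    have hn : (5:ℚ) ≤ ((m+5 : ℕ):ℚ) := by push_cast; linarith [Nat.cast_nonneg (α := ℚ) m]
    rw [he]
    linarith
end

section
/- Let a, b, c be integers with 2 ≤ a ≤ b ≤ c. If 1 - 1/a - 1/b - 1/c > 0, then 1 - 1/a - 1/b - 1/c ≥ 1/42, with equality if and only if (a,b,c) = (2,3,7). -/
lemma hurwitz_inv_le (x y : ℤ) (hx : 0 < x) (hxy : x ≤ y) : (1:ℚ)/y ≤ 1/x := by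
  apply one_div_le_one_div_of_le
  · exact_mod_cast hx
  · exact_mod_cast hxy

/-- Hurwitz bound for hyperbolic triangle signatures. -/
theorem stmt_1 (a b c : ℤ) (ha : 2 ≤ a) (hab : a ≤ b) (hbc : b ≤ c)
    (hpos : 0 < 1 - 1 / (a : ℚ) - 1 / (b : ℚ) - 1 / (c : ℚ)) :
    1 / 42 ≤ 1 - 1 / (a : ℚ) - 1 / (b : ℚ) - 1 / (c : ℚ) ∧
      (1 - 1 / (a : ℚ) - 1 / (b : ℚ) - 1 / (c : ℚ) = 1 / 42 ↔ (a, b, c) = (2, 3, 7)) := by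
  have ha0 : (0:ℤ) < a := by omega
  have hb0 : (0:ℤ) < b := by omega
  have hc0 : (0:ℤ) < c := by omega
  have hcQ : (0:ℚ) < c := by exact_mod_cast hc0
  have hicpos : (0:ℚ) < 1/c := by positivity
  by_cases ha4 : 4 ≤ a
  · -- a ≥ 4: each of 1/a, 1/b, 1/c ≤ 1/4
    have h1 : (1:ℚ)/a ≤ 1/4 := hurwitz_inv_le 4 a (by norm_num) ha4
    have h2 : (1:ℚ)/b ≤ 1/4 := hurwitz_inv_le 4 b (by norm_num) (by omega)
    have h3 : (1:ℚ)/c ≤ 1/4 := hurwitz_inv_le 4 c (by norm_num) (by omega)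
    refine ⟨by linarith, ?_, ?_⟩
    · intro h; linarith
    · intro h; simp only [Prod.mk.injEq] at h; omega
  · -- a = 2 or a = 3
    interval_cases a
    · -- a = 2
      by_cases hb5 : 5 ≤ b
      · have h2 : (1:ℚ)/b ≤ 1/5 := hurwitz_inv_le 5 b (by norm_num) hb5
        have h3 : (1:ℚ)/c ≤ 1/5 := hurwitz_inv_le 5 c (by norm_num) (by omega)
        refine ⟨by push_cast; linarith, ?_, ?_⟩
        · intro h; push_cast at h; linarith
        · intro h; simp only [Prod.mk.injEq] at h; omega
      · interval_cases b
        · -- b = 2: 1 - 1/2 - 1/2 - 1/c = -1/c < 0, contradiction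
          exfalso; push_cast at hpos; linarith
        · -- b = 3: c ≥ 7
          have hc7 : 7 ≤ c := by
            by_contra h
            push_neg at h
            have : (1:ℚ)/6 ≤ 1/c := hurwitz_inv_le c 6 hc0 (by omega)
            push_cast at hpos; linarith
          have h3 : (1:ℚ)/c ≤ 1/7 := hurwitz_inv_le 7 c (by norm_num) hc7
          refine ⟨by push_cast; linarith, ?_, ?_⟩
          · intro h
            push_cast at h
            have hic : (1:ℚ)/c = 1/7 := by linarith
            have hcne : (c:ℚ) ≠ 0 := ne_of_gt hcQ
            have : (c:ℚ) = 7 := by field_simp at hic; linarith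
            have : c = 7 := by exact_mod_cast this
            simp [this]
          · intro h
            simp only [Prod.mk.injEq] at h
            obtain ⟨-, -, h3⟩ := h
            subst h3
            norm_num
        · -- b = 4: c ≥ 5
          have hc5 : 5 ≤ c := by
            by_contra h
            push_neg at h
            have : (1:ℚ)/4 ≤ 1/c := hurwitz_inv_le c 4 hc0 (by omega)
            push_cast at hpos; linarith
          have h3 : (1:ℚ)/c ≤ 1/5 := hurwitz_inv_le 5 c (by norm_num) hc5
          refine ⟨by push_cast; linarith, ?_, ?_⟩
          · intro h; push_cast at h; linarith
          · intro h; simp only [Prod.mk.injEq] at h; omega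
    · -- a = 3
      by_cases hb4 : 4 ≤ b
      · have h2 : (1:ℚ)/b ≤ 1/4 := hurwitz_inv_le 4 b (by norm_num) hb4
        have h3 : (1:ℚ)/c ≤ 1/4 := hurwitz_inv_le 4 c (by norm_num) (by omega)
        refine ⟨by push_cast; linarith, ?_, ?_⟩
        · intro h; push_cast at h; linarith
        · intro h; simp only [Prod.mk.injEq] at h; omega
      · -- b = 3
        have hb3 : b = 3 := by omega
        subst hb3
        have hc4 : 4 ≤ c := by
          by_contra h
          push_neg at h
          have : (1:ℚ)/3 ≤ 1/c := hurwitz_inv_le c 3 hc0 (by omega)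
          push_cast at hpos; linarith
        have h3 : (1:ℚ)/c ≤ 1/4 := hurwitz_inv_le 4 c (by norm_num) hc4
        refine ⟨by push_cast; linarith, ?_, ?_⟩
        · intro h; push_cast at h; linarith
        · intro h; simp only [Prod.mk.injEq] at h; omega
end
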